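/- Let v₁, v₂, v₃ be positive real numbers, V₁, V₂, V₃ real numbers and c, c̃ real constants satisfying the system (⋆). If c − c̃ < 0, then v₁ ≠ v₂, v₃ ≠ v₂, v₁² ≠ 1, v₃² ≠ 1, 3v₁² ≠ 1 and 3v₃² ≠ 1 (i.e. vᵢ² − δᵢ ≠ 0 and 3vᵢ² − δᵢ ≠ 0 for i = 1,2,3). -/
import Mathlib

/-- Cross-product key identity: under the system (⋆),
`(c - ct) * W₁² = V₁² * F` where `W₁ = v₁(v₂²+v₃²)` and `F = Q(a × b)`. -/
lemma stmt6_key (v₁ v₂ v₃ V₁ V₂ V₃ c ct : ℝ)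
    (hv₁ : 0 < v₁) (hv₂ : 0 < v₂) (hv₃ : 0 < v₃)
    (h1 : v₁ * V₁ - v₂ * V₂ + v₃ * V₃ = 0)
    (h2 : V₁ ^ 2 - V₂ ^ 2 + V₃ ^ 2 = c - ct)
    (h3 : V₁ / v₁ + V₂ / v₂ + V₃ / v₃ = 0) :
    (c - ct) * (v₁*(v₂^2+v₃^2))^2 =
      V₁^2 * (v₁^2*(v₂^2+v₃^2)^2 - v₂^2*(v₃^2-v₁^2)^2 + v₃^2*(v₁^2+v₂^2)^2) := by
  have h3' : V₁*v₂*v₃ + V₂*v₁*v₃ + V₃*v₁*v₂ = 0 := by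
    field_simp at h3; linarith
  have hA : V₂ * (v₁*(v₂^2+v₃^2)) = V₁ * (v₂*(v₁^2 - v₃^2)) := by
    linear_combination v₃*h3' - (v₁*v₂)*h1
  have hB : V₃ * (v₁*(v₂^2+v₃^2)) = -(V₁ * (v₃*(v₁^2+v₂^2))) := by
    linear_combination (v₁*v₃)*h1 + v₂*h3'
  linear_combination (-(v₁*(v₂^2+v₃^2))^2) * h2
    - (V₂*(v₁*(v₂^2+v₃^2)) + V₁*(v₂*(v₁^2-v₃^2))) * hA
    + (V₃*(v₁*(v₂^2+v₃^2)) - V₁*(v₃*(v₁^2+v₂^2))) * hB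

/-- If additionally `F ≥ 0` fails to be compatible with `c - ct < 0`, we get `False`. -/
lemma stmt6_contra (v₁ v₂ v₃ V₁ V₂ V₃ c ct : ℝ)
    (hv₁ : 0 < v₁) (hv₂ : 0 < v₂) (hv₃ : 0 < v₃) (hc : c - ct < 0)
    (h1 : v₁ * V₁ - v₂ * V₂ + v₃ * V₃ = 0)
    (h2 : V₁ ^ 2 - V₂ ^ 2 + V₃ ^ 2 = c - ct)
    (h3 : V₁ / v₁ + V₂ / v₂ + V₃ / v₃ = 0)
    (hF : 0 ≤ v₁^2*(v₂^2+v₃^2)^2 - v₂^2*(v₃^2-v₁^2)^2 + v₃^2*(v₁^2+v₂^2)^2) :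
    False := by
  have key := stmt6_key v₁ v₂ v₃ V₁ V₂ V₃ c ct hv₁ hv₂ hv₃ h1 h2 h3
  have hW : 0 < (v₁*(v₂^2+v₃^2))^2 := by positivity
  have hneg : (c - ct) * (v₁*(v₂^2+v₃^2))^2 < 0 := mul_neg_of_neg_of_pos hc hW
  nlinarith [mul_nonneg (sq_nonneg V₁) hF]

/-- under the system (⋆) with c − c̃ < 0 and vᵢ > 0,
one has v₁ ≠ v₂, v₃ ≠ v₂, v₁² ≠ 1, v₃² ≠ 1, 3v₁² ≠ 1, 3v₃² ≠ 1. -/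
theorem stmt_6 (v₁ v₂ v₃ V₁ V₂ V₃ c ct : ℝ)
    (hv₁ : 0 < v₁) (hv₂ : 0 < v₂) (hv₃ : 0 < v₃) (hc : c - ct < 0)
    (h0 : v₁ ^ 2 - v₂ ^ 2 + v₃ ^ 2 = 1)
    (h1 : v₁ * V₁ - v₂ * V₂ + v₃ * V₃ = 0)
    (h2 : V₁ ^ 2 - V₂ ^ 2 + V₃ ^ 2 = c - ct)
    (h3 : V₁ / v₁ + V₂ / v₂ + V₃ / v₃ = 0) :
    v₁ ≠ v₂ ∧ v₃ ≠ v₂ ∧ v₁ ^ 2 ≠ 1 ∧ v₃ ^ 2 ≠ 1 ∧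
      3 * v₁ ^ 2 ≠ 1 ∧ 3 * v₃ ^ 2 ≠ 1 := by
  have contra := stmt6_contra v₁ v₂ v₃ V₁ V₂ V₃ c ct hv₁ hv₂ hv₃ hc h1 h2 h3
  refine ⟨?_, ?_, ?_, ?_, ?_, ?_⟩
  · -- v₁ ≠ v₂ : then v₃² = 1, F = 8 v₁⁴
    intro h
    refine contra ?_
    have hFeq : v₁^2*(v₂^2+v₃^2)^2 - v₂^2*(v₃^2-v₁^2)^2 + v₃^2*(v₁^2+v₂^2)^2
        = 8*(v₂^2*v₃)^2 := by rw [h]; ring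
    rw [hFeq]; positivity
  · -- v₃ ≠ v₂ : F = 8 (v₁ v₂²)²
    intro h
    refine contra ?_
    have hFeq : v₁^2*(v₂^2+v₃^2)^2 - v₂^2*(v₃^2-v₁^2)^2 + v₃^2*(v₁^2+v₂^2)^2
        = 8*(v₁*v₂^2)^2 := by rw [h]; ring
    rw [hFeq]; positivity
  · -- v₁² ≠ 1 : then v₃ = v₂, F = 8 v₃⁴
    intro h; exact contra (by nlinarith [sq_nonneg (v₃*v₃), sq_nonneg v₃])
  · -- v₃² ≠ 1 : then v₁ = v₂, F = 8 v₁⁴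
    intro h; exact contra (by nlinarith [sq_nonneg (v₁*v₁), sq_nonneg v₁])
  · -- 3v₁² ≠ 1 : F = 2 (v₃² − 1/3)²
    intro h; exact contra (by nlinarith [sq_nonneg (v₃^2 - 1/3), sq_nonneg v₃])
  · -- 3v₃² ≠ 1 : F = 2 (v₁² − 1/3)²
    intro h; exact contra (by nlinarith [sq_nonneg (v₁^2 - 1/3), sq_nonneg v₁])
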